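/- The integral ∫_{B_1 × B_1 × B_1} dx dy dz · |ln|x−z|| · |ln|y|| / (|x| · |z| · |x−y| · |y−z|) over triples of points of the closed unit ball in ℝ² is finite. -/

import Mathlib

open Real MeasureTheory Metric Set
open scoped ENNReal

local notation "E2" => EuclideanSpace ℝ (Fin 2)

/-- Integrability of `‖u‖ ^ (-s)` on balls in dimension 2, for `0 < s < 2`. -/
lemma base17 {s : ℝ} (hs0 : 0 < s) (hs : s < 2) (R : ℝ) :
    ∫⁻ u in Metric.closedBall (0 : E2) R, ENNReal.ofReal (‖u‖ ^ (-s)) < ⊤ := by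
  have hmeas : Measurable fun u : E2 => ‖u‖ ^ (-s) := by fun_prop
  rw [lintegral_eq_lintegral_meas_le _
      (Filter.Eventually.of_forall fun u => rpow_nonneg (norm_nonneg u) _) hmeas.aemeasurable]
  set μ := (volume : Measure E2).restrict (Metric.closedBall 0 R) with hμ
  have hdim : (Module.finrank ℝ E2) = 2 := finrank_euclideanSpace_fin
  calc ∫⁻ t in Ioi (0:ℝ), μ {a | t ≤ ‖a‖ ^ (-s)}
      ≤ ∫⁻ t in Ioc (0:ℝ) 1 ∪ Ioi 1, μ {a | t ≤ ‖a‖ ^ (-s)} :=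
        lintegral_mono_set Ioi_subset_Ioc_union_Ioi
    _ ≤ (∫⁻ t in Ioc (0:ℝ) 1, μ {a | t ≤ ‖a‖ ^ (-s)}) +
        ∫⁻ t in Ioi (1:ℝ), μ {a | t ≤ ‖a‖ ^ (-s)} := lintegral_union_le _ _ _
    _ < ⊤ := by
        refine ENNReal.add_lt_top.2 ⟨?_, ?_⟩
        · calc (∫⁻ t in Ioc (0:ℝ) 1, μ {a | t ≤ ‖a‖ ^ (-s)})
              ≤ ∫⁻ _t in Ioc (0:ℝ) 1, volume (Metric.closedBall (0:E2) R) := by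
                refine setLIntegral_mono' measurableSet_Ioc fun t _ => ?_
                exact le_trans (measure_mono (subset_univ _))
                  (by rw [hμ, Measure.restrict_apply_univ])
            _ < ⊤ := by
                rw [setLIntegral_const]
                exact ENNReal.mul_lt_top measure_closedBall_lt_top (by simp)
        · have hb : ∀ t ∈ Ioi (1:ℝ), μ {a | t ≤ ‖a‖ ^ (-s)} ≤
              ENNReal.ofReal (t ^ (-s⁻¹ * 2)) * volume (Metric.ball (0:E2) 1) := by
            intro t ht
            have ht0 : (0:ℝ) < t := lt_trans one_pos ht
            have hsub : {a : E2 | t ≤ ‖a‖ ^ (-s)} ⊆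
                Metric.closedBall (0:E2) (t ^ (-s)⁻¹) := by
              intro a ha
              simp only [mem_setOf_eq] at ha
              rcases eq_or_lt_of_le (norm_nonneg a) with h0 | h0
              · simp [mem_closedBall_zero_iff, ← h0]
                positivity
              · rw [mem_closedBall_zero_iff]
                exact (Real.le_rpow_inv_iff_of_neg h0 ht0 (neg_neg_iff_pos.2 hs0)).2 ha
            calc μ {a | t ≤ ‖a‖ ^ (-s)} ≤ volume {a : E2 | t ≤ ‖a‖ ^ (-s)} :=
                  Measure.restrict_apply_le _ _
              _ ≤ volume (Metric.closedBall (0:E2) (t ^ (-s)⁻¹)) := measure_mono hsub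
              _ = ENNReal.ofReal ((t ^ (-s)⁻¹) ^ (Module.finrank ℝ E2)) *
                    volume (Metric.ball (0:E2) 1) :=
                  Measure.addHaar_closedBall _ _ (by positivity)
              _ = ENNReal.ofReal (t ^ (-s⁻¹ * 2)) * volume (Metric.ball (0:E2) 1) := by
                  rw [hdim, ← Real.rpow_natCast (t ^ (-s)⁻¹) 2, ← Real.rpow_mul ht0.le]
                  rw [inv_neg]; ring_nf
          calc (∫⁻ t in Ioi (1:ℝ), μ {a | t ≤ ‖a‖ ^ (-s)})
              ≤ ∫⁻ t in Ioi (1:ℝ), ENNReal.ofReal (t ^ (-s⁻¹ * 2)) *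
                  volume (Metric.ball (0:E2) 1) :=
                setLIntegral_mono' measurableSet_Ioi hb
            _ < ⊤ := by
                rw [lintegral_mul_const' _ _ measure_ball_lt_top.ne]
                refine ENNReal.mul_lt_top ?_ measure_ball_lt_top
                refine IntegrableOn.setLIntegral_lt_top ?_
                refine integrableOn_Ioi_rpow_of_lt ?_ one_pos
                rw [neg_mul]
                rw [neg_lt_neg_iff]
                rw [inv_mul_eq_div, lt_div_iff₀ hs0] at *
                linarith

/-- Translation bound for lower integrals over the unit ball. -/
lemma trans17 {t : ℝ} {x : E2} (hx : x ∈ Metric.closedBall (0:E2) 1) :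
    ∫⁻ y in Metric.closedBall (0:E2) 1, ENNReal.ofReal (‖x - y‖ ^ (-t)) ≤
    ∫⁻ u in Metric.closedBall (0:E2) 2, ENNReal.ofReal (‖u‖ ^ (-t)) := by
  set g : E2 → ℝ≥0∞ :=
    (Metric.closedBall (0:E2) 2).indicator (fun u => ENNReal.ofReal (‖u‖ ^ (-t))) with hg
  have hm : Measurable fun u : E2 => ENNReal.ofReal (‖u‖ ^ (-t)) := by fun_prop
  have hgmeas : Measurable g := hm.indicator measurableSet_closedBall
  calc ∫⁻ y in Metric.closedBall (0:E2) 1, ENNReal.ofReal (‖x - y‖ ^ (-t))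
      = ∫⁻ y in Metric.closedBall (0:E2) 1, g (x - y) := by
        refine setLIntegral_congr_fun measurableSet_closedBall (fun y hy => ?_)
        rw [hg, indicator_of_mem]
        rw [mem_closedBall_zero_iff]
        calc ‖x - y‖ ≤ ‖x‖ + ‖y‖ := norm_sub_le _ _
          _ ≤ 1 + 1 := add_le_add (mem_closedBall_zero_iff.1 hx) (mem_closedBall_zero_iff.1 hy)
          _ = 2 := by norm_num
    _ ≤ ∫⁻ y, g (x - y) := setLIntegral_le_lintegral _ _
    _ = ∫⁻ u, g u := (Measure.measurePreserving_sub_left volume x).lintegral_comp hgmeas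
    _ = ∫⁻ u in Metric.closedBall (0:E2) 2, ENNReal.ofReal (‖u‖ ^ (-t)) := by
        rw [hg, lintegral_indicator measurableSet_closedBall]

/-- Pointwise two-weight AM–GM decoupling. -/
lemma amgm17 {s t θ : ℝ} (hθ0 : 0 < θ) (hθ1 : θ < 1) (a b : ℝ) (ha : 0 ≤ a) (hb : 0 ≤ b) :
    a ^ (-s) * b ^ (-t) ≤ a ^ (-(s/θ)) + b ^ (-(t/(1-θ))) := by
  have h1 : a ^ (-s) = (a ^ (-(s/θ))) ^ θ := by
    rw [← Real.rpow_mul ha]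
    congr 1
    field_simp
  have hne : (1:ℝ) - θ ≠ 0 := by linarith
  have h2 : b ^ (-t) = (b ^ (-(t/(1-θ)))) ^ (1-θ) := by
    rw [← Real.rpow_mul hb]
    congr 1
    field_simp
  have hA : (0:ℝ) ≤ a ^ (-(s/θ)) := rpow_nonneg ha _
  have hB : (0:ℝ) ≤ b ^ (-(t/(1-θ))) := rpow_nonneg hb _
  calc a ^ (-s) * b ^ (-t) = (a ^ (-(s/θ))) ^ θ * (b ^ (-(t/(1-θ)))) ^ (1-θ) := by
        rw [h1, h2]
    _ ≤ θ * a ^ (-(s/θ)) + (1-θ) * b ^ (-(t/(1-θ))) :=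
        Real.geom_mean_le_arith_mean2_weighted hθ0.le (by linarith) hA hB (by ring)
    _ ≤ a ^ (-(s/θ)) + b ^ (-(t/(1-θ))) := by nlinarith

/-- Uniform bound on a mixed two-singularity integral over the unit ball. -/
lemma uni17 {s t θ s' t' : ℝ} (hθ0 : 0 < θ) (hθ1 : θ < 1)
    (hs' : s / θ = s') (ht' : t / (1 - θ) = t') {x : E2}
    (hx : x ∈ Metric.closedBall (0:E2) 1) :
    ∫⁻ y in Metric.closedBall (0:E2) 1, ENNReal.ofReal (‖y‖ ^ (-s) * ‖x - y‖ ^ (-t)) ≤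
    (∫⁻ y in Metric.closedBall (0:E2) 1, ENNReal.ofReal (‖y‖ ^ (-s'))) +
    ∫⁻ u in Metric.closedBall (0:E2) 2, ENNReal.ofReal (‖u‖ ^ (-t')) := by
  subst hs' ht'
  have hm1 : Measurable fun y : E2 => ENNReal.ofReal (‖y‖ ^ (-(s/θ))) := by fun_prop
  calc ∫⁻ y in Metric.closedBall (0:E2) 1, ENNReal.ofReal (‖y‖ ^ (-s) * ‖x - y‖ ^ (-t))
      ≤ ∫⁻ y in Metric.closedBall (0:E2) 1,
          (ENNReal.ofReal (‖y‖ ^ (-(s/θ))) + ENNReal.ofReal (‖x - y‖ ^ (-(t/(1-θ))))) := by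
        refine setLIntegral_mono' measurableSet_closedBall fun y _ => ?_
        rw [← ENNReal.ofReal_add (rpow_nonneg (norm_nonneg _) _) (rpow_nonneg (norm_nonneg _) _)]
        exact ENNReal.ofReal_le_ofReal
          (amgm17 hθ0 hθ1 _ _ (norm_nonneg _) (norm_nonneg _))
    _ = (∫⁻ y in Metric.closedBall (0:E2) 1, ENNReal.ofReal (‖y‖ ^ (-(s/θ)))) +
        ∫⁻ y in Metric.closedBall (0:E2) 1, ENNReal.ofReal (‖x - y‖ ^ (-(t/(1-θ)))) :=
        lintegral_add_left hm1 _
    _ ≤ _ := add_le_add le_rfl (trans17 hx)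

/-- Pointwise splitting of the two-variable singularity according to which of
`‖z‖`, `‖x - z‖` is larger. -/
lemma split17 {x z : E2} (hx : x ≠ 0) :
    ‖z‖ ^ (-(1:ℝ)) * ‖x - z‖ ^ (-(5/4 : ℝ)) ≤
      2 ^ ((5/8:ℝ)) * ‖x‖ ^ (-(5/8:ℝ)) * (‖z‖ ^ (-(1:ℝ)) * ‖x - z‖ ^ (-(5/8:ℝ))) +
      2 ^ ((1/2:ℝ)) * ‖x‖ ^ (-(1/2:ℝ)) * (‖z‖ ^ (-(1/2:ℝ)) * ‖x - z‖ ^ (-(5/4:ℝ))) := by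
  have hx0 : (0:ℝ) < ‖x‖ := norm_pos_iff.2 hx
  have htri : ‖x‖ ≤ ‖x - z‖ + ‖z‖ := by
    simpa using norm_add_le (x - z) z
  rcases le_total ‖z‖ ‖x - z‖ with h | h
  · have hxz : (0:ℝ) < ‖x - z‖ := by nlinarith
    have key : ‖x - z‖ ^ (-(5/4:ℝ)) ≤
        2 ^ ((5/8:ℝ)) * ‖x‖ ^ (-(5/8:ℝ)) * ‖x - z‖ ^ (-(5/8:ℝ)) := by
      have e : ‖x - z‖ ^ (-(5/4:ℝ)) = ‖x - z‖ ^ (-(5/8:ℝ)) * ‖x - z‖ ^ (-(5/8:ℝ)) := by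
        rw [← Real.rpow_add hxz]; norm_num
      have b1 : ‖x - z‖ ^ (-(5/8:ℝ)) ≤ (‖x‖/2) ^ (-(5/8:ℝ)) :=
        Real.rpow_le_rpow_of_nonpos (by positivity) (by linarith) (by norm_num)
      have b2 : (‖x‖/2) ^ (-(5/8:ℝ)) = 2 ^ ((5/8:ℝ)) * ‖x‖ ^ (-(5/8:ℝ)) := by
        rw [Real.div_rpow hx0.le (by norm_num : (0:ℝ) ≤ 2), div_eq_mul_inv,
          ← Real.rpow_neg (by norm_num : (0:ℝ) ≤ 2), neg_neg]
        ring
      calc ‖x - z‖ ^ (-(5/4:ℝ)) = ‖x - z‖ ^ (-(5/8:ℝ)) * ‖x - z‖ ^ (-(5/8:ℝ)) := e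
        _ ≤ (‖x‖/2) ^ (-(5/8:ℝ)) * ‖x - z‖ ^ (-(5/8:ℝ)) :=
            mul_le_mul_of_nonneg_right b1 (rpow_nonneg hxz.le _)
        _ = 2 ^ ((5/8:ℝ)) * ‖x‖ ^ (-(5/8:ℝ)) * ‖x - z‖ ^ (-(5/8:ℝ)) := by rw [b2]
    have hz0 : (0:ℝ) ≤ ‖z‖ ^ (-(1:ℝ)) := rpow_nonneg (norm_nonneg _) _
    calc ‖z‖ ^ (-(1:ℝ)) * ‖x - z‖ ^ (-(5/4:ℝ))
        ≤ ‖z‖ ^ (-(1:ℝ)) * (2 ^ ((5/8:ℝ)) * ‖x‖ ^ (-(5/8:ℝ)) * ‖x - z‖ ^ (-(5/8:ℝ))) :=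
          mul_le_mul_of_nonneg_left key hz0
      _ = 2 ^ ((5/8:ℝ)) * ‖x‖ ^ (-(5/8:ℝ)) * (‖z‖ ^ (-(1:ℝ)) * ‖x - z‖ ^ (-(5/8:ℝ))) := by ring
      _ ≤ _ := le_add_of_nonneg_right (by positivity)
  · have hz : (0:ℝ) < ‖z‖ := by nlinarith
    have key : ‖z‖ ^ (-(1:ℝ)) ≤
        2 ^ ((1/2:ℝ)) * ‖x‖ ^ (-(1/2:ℝ)) * ‖z‖ ^ (-(1/2:ℝ)) := by
      have e : ‖z‖ ^ (-(1:ℝ)) = ‖z‖ ^ (-(1/2:ℝ)) * ‖z‖ ^ (-(1/2:ℝ)) := by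
        rw [← Real.rpow_add hz]; norm_num
      have b1 : ‖z‖ ^ (-(1/2:ℝ)) ≤ (‖x‖/2) ^ (-(1/2:ℝ)) :=
        Real.rpow_le_rpow_of_nonpos (by positivity) (by linarith) (by norm_num)
      have b2 : (‖x‖/2) ^ (-(1/2:ℝ)) = 2 ^ ((1/2:ℝ)) * ‖x‖ ^ (-(1/2:ℝ)) := by
        rw [Real.div_rpow hx0.le (by norm_num : (0:ℝ) ≤ 2), div_eq_mul_inv,
          ← Real.rpow_neg (by norm_num : (0:ℝ) ≤ 2), neg_neg]
        ring
      calc ‖z‖ ^ (-(1:ℝ)) = ‖z‖ ^ (-(1/2:ℝ)) * ‖z‖ ^ (-(1/2:ℝ)) := e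
        _ ≤ (‖x‖/2) ^ (-(1/2:ℝ)) * ‖z‖ ^ (-(1/2:ℝ)) :=
            mul_le_mul_of_nonneg_right b1 (rpow_nonneg hz.le _)
        _ = 2 ^ ((1/2:ℝ)) * ‖x‖ ^ (-(1/2:ℝ)) * ‖z‖ ^ (-(1/2:ℝ)) := by rw [b2]
    have hxz0 : (0:ℝ) ≤ ‖x - z‖ ^ (-(5/4:ℝ)) := rpow_nonneg (norm_nonneg _) _
    calc ‖z‖ ^ (-(1:ℝ)) * ‖x - z‖ ^ (-(5/4:ℝ))
        ≤ (2 ^ ((1/2:ℝ)) * ‖x‖ ^ (-(1/2:ℝ)) * ‖z‖ ^ (-(1/2:ℝ))) * ‖x - z‖ ^ (-(5/4:ℝ)) :=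
          mul_le_mul_of_nonneg_right key hxz0
      _ = 2 ^ ((1/2:ℝ)) * ‖x‖ ^ (-(1/2:ℝ)) * (‖z‖ ^ (-(1/2:ℝ)) * ‖x - z‖ ^ (-(5/4:ℝ))) := by ring
      _ ≤ _ := le_add_of_nonneg_left (by positivity)

/-- Finiteness of the main two-variable integral
`∫∫_{B×B} ‖x‖⁻¹ ‖z‖⁻¹ ‖x-z‖^{-5/4}`. -/
lemma main217 :
    ∫⁻ x in Metric.closedBall (0:E2) 1, ENNReal.ofReal (‖x‖ ^ (-(1:ℝ))) *
      ∫⁻ z in Metric.closedBall (0:E2) 1,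
        ENNReal.ofReal (‖z‖ ^ (-(1:ℝ)) * ‖x - z‖ ^ (-(5/4:ℝ))) < ⊤ := by
  set K₁ : ℝ≥0∞ :=
    (∫⁻ y in Metric.closedBall (0:E2) 1, ENNReal.ofReal (‖y‖ ^ (-(8/5:ℝ)))) +
    ∫⁻ u in Metric.closedBall (0:E2) 2, ENNReal.ofReal (‖u‖ ^ (-(5/3:ℝ))) with hK₁def
  set K₂ : ℝ≥0∞ :=
    (∫⁻ y in Metric.closedBall (0:E2) 1, ENNReal.ofReal (‖y‖ ^ (-(8/5:ℝ)))) +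
    ∫⁻ u in Metric.closedBall (0:E2) 2, ENNReal.ofReal (‖u‖ ^ (-(20/11:ℝ))) with hK₂def
  have hK₁ : K₁ < ⊤ := ENNReal.add_lt_top.2
    ⟨base17 (by norm_num) (by norm_num) 1, base17 (by norm_num) (by norm_num) 2⟩
  have hK₂ : K₂ < ⊤ := ENNReal.add_lt_top.2
    ⟨base17 (by norm_num) (by norm_num) 1, base17 (by norm_num) (by norm_num) 2⟩
  have hI : ∀ x, x ∈ Metric.closedBall (0:E2) 1 → x ≠ 0 →
      (∫⁻ z in Metric.closedBall (0:E2) 1,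
        ENNReal.ofReal (‖z‖ ^ (-(1:ℝ)) * ‖x - z‖ ^ (-(5/4:ℝ)))) ≤
      ENNReal.ofReal (2 ^ ((5/8:ℝ)) * ‖x‖ ^ (-(5/8:ℝ))) * K₁ +
      ENNReal.ofReal (2 ^ ((1/2:ℝ)) * ‖x‖ ^ (-(1/2:ℝ))) * K₂ := by
    intro x hx hx0
    calc ∫⁻ z in Metric.closedBall (0:E2) 1,
          ENNReal.ofReal (‖z‖ ^ (-(1:ℝ)) * ‖x - z‖ ^ (-(5/4:ℝ)))
        ≤ ∫⁻ z in Metric.closedBall (0:E2) 1,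
            (ENNReal.ofReal (2 ^ ((5/8:ℝ)) * ‖x‖ ^ (-(5/8:ℝ))) *
              ENNReal.ofReal (‖z‖ ^ (-(1:ℝ)) * ‖x - z‖ ^ (-(5/8:ℝ))) +
            ENNReal.ofReal (2 ^ ((1/2:ℝ)) * ‖x‖ ^ (-(1/2:ℝ))) *
              ENNReal.ofReal (‖z‖ ^ (-(1/2:ℝ)) * ‖x - z‖ ^ (-(5/4:ℝ)))) := by
          refine setLIntegral_mono' measurableSet_closedBall fun z _ => ?_
          rw [← ENNReal.ofReal_mul (by positivity), ← ENNReal.ofReal_mul (by positivity),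
            ← ENNReal.ofReal_add (by positivity) (by positivity)]
          exact ENNReal.ofReal_le_ofReal (split17 hx0)
      _ = ENNReal.ofReal (2 ^ ((5/8:ℝ)) * ‖x‖ ^ (-(5/8:ℝ))) *
            (∫⁻ z in Metric.closedBall (0:E2) 1,
              ENNReal.ofReal (‖z‖ ^ (-(1:ℝ)) * ‖x - z‖ ^ (-(5/8:ℝ)))) +
          ENNReal.ofReal (2 ^ ((1/2:ℝ)) * ‖x‖ ^ (-(1/2:ℝ))) *
            (∫⁻ z in Metric.closedBall (0:E2) 1,
              ENNReal.ofReal (‖z‖ ^ (-(1/2:ℝ)) * ‖x - z‖ ^ (-(5/4:ℝ)))) := by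
          rw [lintegral_add_left (by fun_prop),
            lintegral_const_mul' _ _ ENNReal.ofReal_ne_top,
            lintegral_const_mul' _ _ ENNReal.ofReal_ne_top]
      _ ≤ ENNReal.ofReal (2 ^ ((5/8:ℝ)) * ‖x‖ ^ (-(5/8:ℝ))) * K₁ +
          ENNReal.ofReal (2 ^ ((1/2:ℝ)) * ‖x‖ ^ (-(1/2:ℝ))) * K₂ := by
          gcongr
          · exact uni17 (θ := 5/8) (by norm_num) (by norm_num) (by norm_num) (by norm_num) hx
          · exact uni17 (θ := 5/16) (by norm_num) (by norm_num) (by norm_num) (by norm_num) hx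
  have h0 : ∀ᵐ x : E2 ∂volume, x ≠ 0 := by
    rw [ae_iff]
    simpa [not_not, Set.setOf_eq_eq_singleton] using measure_singleton (0:E2)
  calc ∫⁻ x in Metric.closedBall (0:E2) 1, ENNReal.ofReal (‖x‖ ^ (-(1:ℝ))) *
        ∫⁻ z in Metric.closedBall (0:E2) 1,
          ENNReal.ofReal (‖z‖ ^ (-(1:ℝ)) * ‖x - z‖ ^ (-(5/4:ℝ)))
      ≤ ∫⁻ x in Metric.closedBall (0:E2) 1,
          (ENNReal.ofReal (2 ^ ((5/8:ℝ))) * ENNReal.ofReal (‖x‖ ^ (-(13/8:ℝ))) * K₁ +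
           ENNReal.ofReal (2 ^ ((1/2:ℝ))) * ENNReal.ofReal (‖x‖ ^ (-(3/2:ℝ))) * K₂) := by
        refine lintegral_mono_ae ?_
        filter_upwards [ae_restrict_mem measurableSet_closedBall, ae_restrict_of_ae h0]
          with x hx hx0
        have hxp : (0:ℝ) < ‖x‖ := norm_pos_iff.2 hx0
        have e₁ : ‖x‖ ^ (-(1:ℝ)) * ‖x‖ ^ (-(5/8:ℝ)) = ‖x‖ ^ (-(13/8:ℝ)) := by
          rw [← Real.rpow_add hxp]; norm_num
        have e₂ : ‖x‖ ^ (-(1:ℝ)) * ‖x‖ ^ (-(1/2:ℝ)) = ‖x‖ ^ (-(3/2:ℝ)) := by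
          rw [← Real.rpow_add hxp]; norm_num
        calc ENNReal.ofReal (‖x‖ ^ (-(1:ℝ))) *
              ∫⁻ z in Metric.closedBall (0:E2) 1,
                ENNReal.ofReal (‖z‖ ^ (-(1:ℝ)) * ‖x - z‖ ^ (-(5/4:ℝ)))
            ≤ ENNReal.ofReal (‖x‖ ^ (-(1:ℝ))) *
              (ENNReal.ofReal (2 ^ ((5/8:ℝ)) * ‖x‖ ^ (-(5/8:ℝ))) * K₁ +
               ENNReal.ofReal (2 ^ ((1/2:ℝ)) * ‖x‖ ^ (-(1/2:ℝ))) * K₂) :=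
              mul_le_mul_right (hI x hx hx0) _
          _ = ENNReal.ofReal (2 ^ ((5/8:ℝ))) * ENNReal.ofReal (‖x‖ ^ (-(13/8:ℝ))) * K₁ +
              ENNReal.ofReal (2 ^ ((1/2:ℝ))) * ENNReal.ofReal (‖x‖ ^ (-(3/2:ℝ))) * K₂ := by
              rw [← e₁, ← e₂]
              rw [ENNReal.ofReal_mul (by positivity), ENNReal.ofReal_mul (by positivity),
                ENNReal.ofReal_mul (by positivity), ENNReal.ofReal_mul (by positivity)]
              ring
      _ = ENNReal.ofReal (2 ^ ((5/8:ℝ))) *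
            (∫⁻ x in Metric.closedBall (0:E2) 1, ENNReal.ofReal (‖x‖ ^ (-(13/8:ℝ)))) * K₁ +
          ENNReal.ofReal (2 ^ ((1/2:ℝ))) *
            (∫⁻ x in Metric.closedBall (0:E2) 1, ENNReal.ofReal (‖x‖ ^ (-(3/2:ℝ)))) * K₂ := by
          rw [lintegral_add_left (by fun_prop)]
          rw [lintegral_mul_const' _ _ hK₁.ne, lintegral_mul_const' _ _ hK₂.ne,
            lintegral_const_mul' _ _ ENNReal.ofReal_ne_top,
            lintegral_const_mul' _ _ ENNReal.ofReal_ne_top]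
      _ < ⊤ := by
          refine ENNReal.add_lt_top.2 ⟨?_, ?_⟩
          · exact ENNReal.mul_lt_top
              (ENNReal.mul_lt_top ENNReal.ofReal_lt_top
                (base17 (by norm_num) (by norm_num) 1)) hK₁
          · exact ENNReal.mul_lt_top
              (ENNReal.mul_lt_top ENNReal.ofReal_lt_top
                (base17 (by norm_num) (by norm_num) 1)) hK₂

lemma log_le17 {c : ℝ} (h0 : 0 ≤ c) (h2 : c ≤ 2) : |Real.log c| ≤ 4 * c ^ (-(1/4:ℝ)) := by
  rcases eq_or_lt_of_le h0 with h | h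
  · rw [← h]
    simp [Real.log_zero, Real.zero_rpow (by norm_num : (-(1/4:ℝ)) ≠ 0)]
  · rcases le_total c 1 with hc1 | hc1
    · have hlog : Real.log (c ^ (-(1/4:ℝ))) = -(1/4) * Real.log c := Real.log_rpow h _
      have hle : Real.log (c ^ (-(1/4:ℝ))) ≤ c ^ (-(1/4:ℝ)) - 1 :=
        Real.log_le_sub_one_of_pos (Real.rpow_pos_of_pos h _)
      have habs : |Real.log c| = -Real.log c := abs_of_nonpos (Real.log_nonpos h0 hc1)
      rw [habs]; rw [hlog] at hle; linarith
    · have habs : |Real.log c| = Real.log c := abs_of_nonneg (Real.log_nonneg hc1)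
      have h1 : Real.log c ≤ c - 1 := Real.log_le_sub_one_of_pos h
      have h2' : c ^ (-(1:ℝ)) ≤ c ^ (-(1/4:ℝ)) :=
        Real.rpow_le_rpow_of_exponent_le hc1 (by norm_num)
      have h3 : c ^ (-(1:ℝ)) = c⁻¹ := Real.rpow_neg_one c
      have h4 : (2:ℝ)⁻¹ ≤ c⁻¹ := by
        apply inv_anti₀ h h2
      rw [habs]; rw [h3] at h2'; linarith

lemma claim117 {a b c : ℝ} (ha : 0 ≤ a) (hb : 0 ≤ b) (hc : 0 ≤ c) (h : c ≤ a + b) :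
    c ^ (-(1/4:ℝ)) * (a⁻¹ * b⁻¹) ≤ c ^ (-(5/4:ℝ)) * (a⁻¹ + b⁻¹) := by
  rcases eq_or_lt_of_le hc with h0 | h0
  · rw [← h0, Real.zero_rpow (by norm_num : (-(1/4:ℝ)) ≠ 0),
      Real.zero_rpow (by norm_num : (-(5/4:ℝ)) ≠ 0), zero_mul, zero_mul]
  rcases eq_or_lt_of_le ha with ha0 | ha0
  · rw [← ha0, inv_zero, zero_mul, mul_zero]; positivity
  rcases eq_or_lt_of_le hb with hb0 | hb0
  · rw [← hb0, inv_zero, mul_zero, mul_zero]; positivity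
  · have e : c ^ (-(1/4:ℝ)) = c * c ^ (-(5/4:ℝ)) := by
      rw [show (-(1/4:ℝ)) = 1 + -(5/4:ℝ) by norm_num, Real.rpow_add h0, Real.rpow_one]
    rw [e]
    have key : c * (a⁻¹ * b⁻¹) ≤ a⁻¹ + b⁻¹ := by
      have expand : (a + b) * (a⁻¹ * b⁻¹) = a⁻¹ + b⁻¹ := by
        field_simp
        ring
      calc c * (a⁻¹ * b⁻¹) ≤ (a + b) * (a⁻¹ * b⁻¹) :=
            mul_le_mul_of_nonneg_right h (by positivity)
        _ = a⁻¹ + b⁻¹ := expand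
    calc c * c ^ (-(5/4:ℝ)) * (a⁻¹ * b⁻¹) = c ^ (-(5/4:ℝ)) * (c * (a⁻¹ * b⁻¹)) := by ring
      _ ≤ c ^ (-(5/4:ℝ)) * (a⁻¹ + b⁻¹) := mul_le_mul_of_nonneg_left key (by positivity)

/-- First dominating function. -/
noncomputable def H1 (p : E2 × (E2 × E2)) : ℝ :=
  ‖p.1‖ ^ (-(1:ℝ)) * ((‖p.2.1‖ ^ (-(1/4:ℝ)) * ‖p.1 - p.2.1‖ ^ (-(1:ℝ))) *
    (‖p.2.2‖ ^ (-(1:ℝ)) * ‖p.1 - p.2.2‖ ^ (-(5/4:ℝ))))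

/-- Second dominating function. -/
noncomputable def H2 (p : E2 × (E2 × E2)) : ℝ :=
  ‖p.1‖ ^ (-(1:ℝ)) * ((‖p.2.1‖ ^ (-(1/4:ℝ)) * ‖p.2.2 - p.2.1‖ ^ (-(1:ℝ))) *
    (‖p.2.2‖ ^ (-(1:ℝ)) * ‖p.1 - p.2.2‖ ^ (-(5/4:ℝ))))

lemma H1_nonneg (p : E2 × (E2 × E2)) : 0 ≤ H1 p := by
  simp only [H1]; positivity

lemma H2_nonneg (p : E2 × (E2 × E2)) : 0 ≤ H2 p := by
  simp only [H2]; positivity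

lemma claimF17 (p : E2 × (E2 × E2))
    (hp : p ∈ (Metric.closedBall (0:E2) 1 ×ˢ
      (Metric.closedBall (0:E2) 1 ×ˢ Metric.closedBall (0:E2) 1))) :
    |Real.log ‖p.1 - p.2.2‖| * |Real.log ‖p.2.1‖| /
      (‖p.1‖ * ‖p.2.2‖ * ‖p.1 - p.2.1‖ * ‖p.2.1 - p.2.2‖) ≤ 16 * (H1 p + H2 p) := by
  obtain ⟨x, y, z⟩ := p
  simp only [Set.mem_prod] at hp
  obtain ⟨hx, hy, hz⟩ := hp
  have hxz2 : ‖x - z‖ ≤ 2 := by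
    calc ‖x - z‖ ≤ ‖x‖ + ‖z‖ := norm_sub_le _ _
      _ ≤ 1 + 1 := add_le_add (mem_closedBall_zero_iff.1 hx) (mem_closedBall_zero_iff.1 hz)
      _ = 2 := by norm_num
  have hy2 : ‖y‖ ≤ 2 := le_trans (mem_closedBall_zero_iff.1 hy) one_le_two
  have htri : ‖x - z‖ ≤ ‖x - y‖ + ‖y - z‖ := by
    have hxyz : x - z = (x - y) + (y - z) := by abel
    rw [hxyz]; exact norm_add_le _ _
  have l1 := log_le17 (norm_nonneg (x - z)) hxz2
  have l2 := log_le17 (norm_nonneg y) hy2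
  have c1 := claim117 (norm_nonneg (x - y)) (norm_nonneg (y - z)) (norm_nonneg (x - z)) htri
  have r1 : ∀ w : E2, ‖w‖ ^ (-(1:ℝ)) = ‖w‖⁻¹ := fun w => Real.rpow_neg_one _
  simp only [H1, H2, r1]
  rw [show ‖z - y‖ = ‖y - z‖ from norm_sub_rev _ _]
  calc |Real.log ‖x - z‖| * |Real.log ‖y‖| / (‖x‖ * ‖z‖ * ‖x - y‖ * ‖y - z‖)
        = |Real.log ‖x - z‖| * |Real.log ‖y‖| *
            (‖x‖⁻¹ * ‖z‖⁻¹ * (‖x - y‖⁻¹ * ‖y - z‖⁻¹)) := by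
          rw [div_eq_mul_inv, mul_inv, mul_inv, mul_inv]; ring
      _ ≤ (4 * ‖x - z‖ ^ (-(1/4:ℝ))) * (4 * ‖y‖ ^ (-(1/4:ℝ))) *
            (‖x‖⁻¹ * ‖z‖⁻¹ * (‖x - y‖⁻¹ * ‖y - z‖⁻¹)) := by
          refine mul_le_mul (mul_le_mul l1 l2 (abs_nonneg _) (by positivity)) le_rfl
            (by positivity) (by positivity)
      _ = 16 * (‖x‖⁻¹ * ‖z‖⁻¹ * ‖y‖ ^ (-(1/4:ℝ))) *
            (‖x - z‖ ^ (-(1/4:ℝ)) * (‖x - y‖⁻¹ * ‖y - z‖⁻¹)) := by ring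
      _ ≤ 16 * (‖x‖⁻¹ * ‖z‖⁻¹ * ‖y‖ ^ (-(1/4:ℝ))) *
            (‖x - z‖ ^ (-(5/4:ℝ)) * (‖x - y‖⁻¹ + ‖y - z‖⁻¹)) :=
          mul_le_mul_of_nonneg_left c1 (by positivity)
      _ = 16 * (‖x‖⁻¹ * (‖y‖ ^ (-(1/4:ℝ)) * ‖x - y‖⁻¹ * (‖z‖⁻¹ * ‖x - z‖ ^ (-(5/4:ℝ)))) +
            ‖x‖⁻¹ * (‖y‖ ^ (-(1/4:ℝ)) * ‖y - z‖⁻¹ * (‖z‖⁻¹ * ‖x - z‖ ^ (-(5/4:ℝ))))) := by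
          ring

/-- The uniform constant bounding the inner `y`-integral. -/
noncomputable def K0 : ℝ≥0∞ :=
  (∫⁻ y in Metric.closedBall (0:E2) 1, ENNReal.ofReal (‖y‖ ^ (-(1:ℝ)))) +
  ∫⁻ u in Metric.closedBall (0:E2) 2, ENNReal.ofReal (‖u‖ ^ (-(4/3:ℝ)))

lemma K0fin : K0 < ⊤ := ENNReal.add_lt_top.2
  ⟨base17 (by norm_num) (by norm_num) 1, base17 (by norm_num) (by norm_num) 2⟩

lemma K0bound {x : E2} (hx : x ∈ Metric.closedBall (0:E2) 1) :
    ∫⁻ y in Metric.closedBall (0:E2) 1,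
      ENNReal.ofReal (‖y‖ ^ (-(1/4:ℝ)) * ‖x - y‖ ^ (-(1:ℝ))) ≤ K0 :=
  uni17 (θ := 1/4) (by norm_num) (by norm_num) (by norm_num) (by norm_num) hx

lemma restrict_eq17 :
    (volume : Measure (E2 × (E2 × E2))).restrict
      (Metric.closedBall (0:E2) 1 ×ˢ
        (Metric.closedBall (0:E2) 1 ×ˢ Metric.closedBall (0:E2) 1)) =
    ((volume : Measure E2).restrict (Metric.closedBall (0:E2) 1)).prod
      ((((volume : Measure E2).restrict (Metric.closedBall (0:E2) 1))).prod
        ((volume : Measure E2).restrict (Metric.closedBall (0:E2) 1))) := by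
  rw [Measure.volume_eq_prod, Measure.volume_eq_prod, ← Measure.prod_restrict,
    ← Measure.prod_restrict]

lemma H1fin :
    ∫⁻ p in (Metric.closedBall (0:E2) 1 ×ˢ
      (Metric.closedBall (0:E2) 1 ×ˢ Metric.closedBall (0:E2) 1)),
      ENNReal.ofReal (H1 p) < ⊤ := by
  have hmeasy : ∀ x : E2, Measurable fun y : E2 =>
      ENNReal.ofReal (‖y‖ ^ (-(1/4:ℝ)) * ‖x - y‖ ^ (-(1:ℝ))) := fun x => by fun_prop
  have hmeasz : ∀ x : E2, Measurable fun z : E2 =>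
      ENNReal.ofReal (‖z‖ ^ (-(1:ℝ)) * ‖x - z‖ ^ (-(5/4:ℝ))) := fun x => by fun_prop
  have hmeasH : Measurable fun p : E2 × (E2 × E2) => ENNReal.ofReal (H1 p) := by
    simp only [H1]; fun_prop
  rw [restrict_eq17, lintegral_prod _ hmeasH.aemeasurable]
  have inner_eq : ∀ x : E2,
      (∫⁻ yz, ENNReal.ofReal (H1 (x, yz))
        ∂(((volume : Measure E2).restrict (Metric.closedBall (0:E2) 1)).prod
          ((volume : Measure E2).restrict (Metric.closedBall (0:E2) 1))))
      = ENNReal.ofReal (‖x‖ ^ (-(1:ℝ))) *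
        ((∫⁻ y in Metric.closedBall (0:E2) 1,
            ENNReal.ofReal (‖y‖ ^ (-(1/4:ℝ)) * ‖x - y‖ ^ (-(1:ℝ)))) *
         (∫⁻ z in Metric.closedBall (0:E2) 1,
            ENNReal.ofReal (‖z‖ ^ (-(1:ℝ)) * ‖x - z‖ ^ (-(5/4:ℝ))))) := by
    intro x
    rw [← lintegral_prod_mul ((hmeasy x).aemeasurable) ((hmeasz x).aemeasurable),
      ← lintegral_const_mul' _ _ ENNReal.ofReal_ne_top]
    refine lintegral_congr fun yz => ?_
    simp only [H1]
    rw [ENNReal.ofReal_mul (by positivity), ENNReal.ofReal_mul (by positivity)]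
  simp only [inner_eq]
  calc ∫⁻ x in Metric.closedBall (0:E2) 1, ENNReal.ofReal (‖x‖ ^ (-(1:ℝ))) *
        ((∫⁻ y in Metric.closedBall (0:E2) 1,
            ENNReal.ofReal (‖y‖ ^ (-(1/4:ℝ)) * ‖x - y‖ ^ (-(1:ℝ)))) *
         (∫⁻ z in Metric.closedBall (0:E2) 1,
            ENNReal.ofReal (‖z‖ ^ (-(1:ℝ)) * ‖x - z‖ ^ (-(5/4:ℝ)))))
      ≤ ∫⁻ x in Metric.closedBall (0:E2) 1, K0 * (ENNReal.ofReal (‖x‖ ^ (-(1:ℝ))) *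
          ∫⁻ z in Metric.closedBall (0:E2) 1,
            ENNReal.ofReal (‖z‖ ^ (-(1:ℝ)) * ‖x - z‖ ^ (-(5/4:ℝ)))) := by
        refine lintegral_mono_ae ?_
        filter_upwards [ae_restrict_mem measurableSet_closedBall] with x hx
        calc ENNReal.ofReal (‖x‖ ^ (-(1:ℝ))) * ((∫⁻ y in Metric.closedBall (0:E2) 1,
                ENNReal.ofReal (‖y‖ ^ (-(1/4:ℝ)) * ‖x - y‖ ^ (-(1:ℝ)))) *
              (∫⁻ z in Metric.closedBall (0:E2) 1,
                ENNReal.ofReal (‖z‖ ^ (-(1:ℝ)) * ‖x - z‖ ^ (-(5/4:ℝ)))))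
            ≤ ENNReal.ofReal (‖x‖ ^ (-(1:ℝ))) * (K0 *
              (∫⁻ z in Metric.closedBall (0:E2) 1,
                ENNReal.ofReal (‖z‖ ^ (-(1:ℝ)) * ‖x - z‖ ^ (-(5/4:ℝ))))) :=
              mul_le_mul_right (mul_le_mul_left (K0bound hx) _) _
          _ = K0 * (ENNReal.ofReal (‖x‖ ^ (-(1:ℝ))) *
              ∫⁻ z in Metric.closedBall (0:E2) 1,
                ENNReal.ofReal (‖z‖ ^ (-(1:ℝ)) * ‖x - z‖ ^ (-(5/4:ℝ)))) := by
              rw [mul_left_comm]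
    _ = K0 * ∫⁻ x in Metric.closedBall (0:E2) 1, ENNReal.ofReal (‖x‖ ^ (-(1:ℝ))) *
          ∫⁻ z in Metric.closedBall (0:E2) 1,
            ENNReal.ofReal (‖z‖ ^ (-(1:ℝ)) * ‖x - z‖ ^ (-(5/4:ℝ))) :=
        lintegral_const_mul' _ _ K0fin.ne
    _ < ⊤ := ENNReal.mul_lt_top K0fin main217

lemma H2fin :
    ∫⁻ p in (Metric.closedBall (0:E2) 1 ×ˢ
      (Metric.closedBall (0:E2) 1 ×ˢ Metric.closedBall (0:E2) 1)),
      ENNReal.ofReal (H2 p) < ⊤ := by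
  have hmeasH : Measurable fun p : E2 × (E2 × E2) => ENNReal.ofReal (H2 p) := by
    simp only [H2]; fun_prop
  rw [restrict_eq17, lintegral_prod _ hmeasH.aemeasurable]
  have hin : ∀ x : E2,
      (∫⁻ yz, ENNReal.ofReal (H2 (x, yz))
        ∂(((volume : Measure E2).restrict (Metric.closedBall (0:E2) 1)).prod
          ((volume : Measure E2).restrict (Metric.closedBall (0:E2) 1))))
      ≤ K0 * (ENNReal.ofReal (‖x‖ ^ (-(1:ℝ))) *
          ∫⁻ z in Metric.closedBall (0:E2) 1,
            ENNReal.ofReal (‖z‖ ^ (-(1:ℝ)) * ‖x - z‖ ^ (-(5/4:ℝ)))) := by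
    intro x
    have hmeasF : Measurable fun yz : E2 × E2 =>
        ENNReal.ofReal (‖yz.1‖ ^ (-(1/4:ℝ)) * ‖yz.2 - yz.1‖ ^ (-(1:ℝ))) *
          ENNReal.ofReal (‖yz.2‖ ^ (-(1:ℝ)) * ‖x - yz.2‖ ^ (-(5/4:ℝ))) := by fun_prop
    calc (∫⁻ yz, ENNReal.ofReal (H2 (x, yz))
          ∂(((volume : Measure E2).restrict (Metric.closedBall (0:E2) 1)).prod
            ((volume : Measure E2).restrict (Metric.closedBall (0:E2) 1))))
        = ENNReal.ofReal (‖x‖ ^ (-(1:ℝ))) *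
          ∫⁻ yz, (ENNReal.ofReal (‖yz.1‖ ^ (-(1/4:ℝ)) * ‖yz.2 - yz.1‖ ^ (-(1:ℝ))) *
              ENNReal.ofReal (‖yz.2‖ ^ (-(1:ℝ)) * ‖x - yz.2‖ ^ (-(5/4:ℝ))))
            ∂(((volume : Measure E2).restrict (Metric.closedBall (0:E2) 1)).prod
              ((volume : Measure E2).restrict (Metric.closedBall (0:E2) 1))) := by
          rw [← lintegral_const_mul' _ _ ENNReal.ofReal_ne_top]
          refine lintegral_congr fun yz => ?_
          simp only [H2]
          rw [ENNReal.ofReal_mul (by positivity), ENNReal.ofReal_mul (by positivity)]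
      _ = ENNReal.ofReal (‖x‖ ^ (-(1:ℝ))) *
          ∫⁻ z in Metric.closedBall (0:E2) 1,
            ∫⁻ y in Metric.closedBall (0:E2) 1,
              ENNReal.ofReal (‖y‖ ^ (-(1/4:ℝ)) * ‖z - y‖ ^ (-(1:ℝ))) *
                ENNReal.ofReal (‖z‖ ^ (-(1:ℝ)) * ‖x - z‖ ^ (-(5/4:ℝ))) := by
          rw [lintegral_prod_symm _ hmeasF.aemeasurable]
      _ = ENNReal.ofReal (‖x‖ ^ (-(1:ℝ))) *
          ∫⁻ z in Metric.closedBall (0:E2) 1,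
            (∫⁻ y in Metric.closedBall (0:E2) 1,
              ENNReal.ofReal (‖y‖ ^ (-(1/4:ℝ)) * ‖z - y‖ ^ (-(1:ℝ)))) *
                ENNReal.ofReal (‖z‖ ^ (-(1:ℝ)) * ‖x - z‖ ^ (-(5/4:ℝ))) := by
          congr 1
          refine lintegral_congr fun z => ?_
          rw [lintegral_mul_const' _ _ ENNReal.ofReal_ne_top]
      _ ≤ ENNReal.ofReal (‖x‖ ^ (-(1:ℝ))) *
          ∫⁻ z in Metric.closedBall (0:E2) 1,
            K0 * ENNReal.ofReal (‖z‖ ^ (-(1:ℝ)) * ‖x - z‖ ^ (-(5/4:ℝ))) := by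
          refine mul_le_mul_right (lintegral_mono_ae ?_) _
          filter_upwards [ae_restrict_mem measurableSet_closedBall] with z hz
          exact mul_le_mul_left (K0bound hz) _
      _ = K0 * (ENNReal.ofReal (‖x‖ ^ (-(1:ℝ))) *
          ∫⁻ z in Metric.closedBall (0:E2) 1,
            ENNReal.ofReal (‖z‖ ^ (-(1:ℝ)) * ‖x - z‖ ^ (-(5/4:ℝ)))) := by
          rw [lintegral_const_mul' _ _ K0fin.ne, mul_left_comm]
  calc ∫⁻ x in Metric.closedBall (0:E2) 1,
        ∫⁻ yz, ENNReal.ofReal (H2 (x, yz))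
          ∂(((volume : Measure E2).restrict (Metric.closedBall (0:E2) 1)).prod
            ((volume : Measure E2).restrict (Metric.closedBall (0:E2) 1)))
      ≤ ∫⁻ x in Metric.closedBall (0:E2) 1, K0 * (ENNReal.ofReal (‖x‖ ^ (-(1:ℝ))) *
          ∫⁻ z in Metric.closedBall (0:E2) 1,
            ENNReal.ofReal (‖z‖ ^ (-(1:ℝ)) * ‖x - z‖ ^ (-(5/4:ℝ)))) :=
        lintegral_mono hin
    _ = K0 * ∫⁻ x in Metric.closedBall (0:E2) 1, ENNReal.ofReal (‖x‖ ^ (-(1:ℝ))) *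
          ∫⁻ z in Metric.closedBall (0:E2) 1,
            ENNReal.ofReal (‖z‖ ^ (-(1:ℝ)) * ‖x - z‖ ^ (-(5/4:ℝ))) :=
        lintegral_const_mul' _ _ K0fin.ne
    _ < ⊤ := ENNReal.mul_lt_top K0fin main217

/-- Convergence of the second triangular diagram integral
`∫_{B₁³} |ln|x−z|| |ln|y|| / (|x||z||x−y||y−z|)`. -/
theorem stmt_17 :
    IntegrableOn
      (fun p : EuclideanSpace ℝ (Fin 2) ×
          (EuclideanSpace ℝ (Fin 2) × EuclideanSpace ℝ (Fin 2)) =>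
        |Real.log ‖p.1 - p.2.2‖| * |Real.log ‖p.2.1‖| /
          (‖p.1‖ * ‖p.2.2‖ * ‖p.1 - p.2.1‖ * ‖p.2.1 - p.2.2‖))
      (Metric.closedBall (0 : EuclideanSpace ℝ (Fin 2)) 1 ×ˢ
        (Metric.closedBall (0 : EuclideanSpace ℝ (Fin 2)) 1 ×ˢ
          Metric.closedBall (0 : EuclideanSpace ℝ (Fin 2)) 1)) := by
  have hDmeas : MeasurableSet (Metric.closedBall (0:E2) 1 ×ˢ
      (Metric.closedBall (0:E2) 1 ×ˢ Metric.closedBall (0:E2) 1)) :=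
    measurableSet_closedBall.prod (measurableSet_closedBall.prod measurableSet_closedBall)
  have hmeasH1 : Measurable fun p : E2 × (E2 × E2) => ENNReal.ofReal (H1 p) := by
    simp only [H1]; fun_prop
  constructor
  · refine Measurable.aestronglyMeasurable ?_
    have m1 : Measurable fun p : E2 × (E2 × E2) => |Real.log ‖p.1 - p.2.2‖| :=
      (Real.measurable_log.comp ((measurable_fst.sub measurable_snd.snd).norm)).abs
    have m2 : Measurable fun p : E2 × (E2 × E2) => |Real.log ‖p.2.1‖| :=
      (Real.measurable_log.comp measurable_snd.fst.norm).abs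
    have m3 : Measurable fun p : E2 × (E2 × E2) =>
        ‖p.1‖ * ‖p.2.2‖ * ‖p.1 - p.2.1‖ * ‖p.2.1 - p.2.2‖ :=
      ((measurable_fst.norm.mul measurable_snd.snd.norm).mul
        (measurable_fst.sub measurable_snd.fst).norm).mul
        (measurable_snd.fst.sub measurable_snd.snd).norm
    exact (m1.mul m2).div m3
  · rw [hasFiniteIntegral_iff_ofReal (ae_of_all _ fun p => by positivity)]
    calc ∫⁻ p in (Metric.closedBall (0:E2) 1 ×ˢ
          (Metric.closedBall (0:E2) 1 ×ˢ Metric.closedBall (0:E2) 1)),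
          ENNReal.ofReal (|Real.log ‖p.1 - p.2.2‖| * |Real.log ‖p.2.1‖| /
            (‖p.1‖ * ‖p.2.2‖ * ‖p.1 - p.2.1‖ * ‖p.2.1 - p.2.2‖))
        ≤ ∫⁻ p in (Metric.closedBall (0:E2) 1 ×ˢ
            (Metric.closedBall (0:E2) 1 ×ˢ Metric.closedBall (0:E2) 1)),
            ENNReal.ofReal (16 * (H1 p + H2 p)) :=
          setLIntegral_mono' hDmeas fun p hp =>
            ENNReal.ofReal_le_ofReal (claimF17 p hp)
      _ = ∫⁻ p in (Metric.closedBall (0:E2) 1 ×ˢ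
            (Metric.closedBall (0:E2) 1 ×ˢ Metric.closedBall (0:E2) 1)),
            ENNReal.ofReal 16 * (ENNReal.ofReal (H1 p) + ENNReal.ofReal (H2 p)) :=
          lintegral_congr fun p => by
            rw [ENNReal.ofReal_mul (by norm_num),
              ENNReal.ofReal_add (H1_nonneg p) (H2_nonneg p)]
      _ = ENNReal.ofReal 16 *
            ((∫⁻ p in (Metric.closedBall (0:E2) 1 ×ˢ
              (Metric.closedBall (0:E2) 1 ×ˢ Metric.closedBall (0:E2) 1)),
                ENNReal.ofReal (H1 p)) +
             ∫⁻ p in (Metric.closedBall (0:E2) 1 ×ˢ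
              (Metric.closedBall (0:E2) 1 ×ˢ Metric.closedBall (0:E2) 1)),
                ENNReal.ofReal (H2 p)) := by
          rw [lintegral_const_mul' _ _ ENNReal.ofReal_ne_top, lintegral_add_left hmeasH1]
      _ < ⊤ := ENNReal.mul_lt_top ENNReal.ofReal_lt_top
          (ENNReal.add_lt_top.2 ⟨H1fin, H2fin⟩)
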